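/- Let 0 ≤ ε < 1, 0 ≤ p ≤ 1, let N be the single-qubit generalized amplitude damping channel with Kraus operators E_0 = √p·diag(1, √(1−ε)), E_1 = √p·√ε·|0⟩⟨1|, E_2 = √(1−p)·diag(√(1−ε), 1), E_3 = √(1−p)·√ε·|1⟩⟨0|, and let O be the Pauli matrix X or Y. Then the retrieving cost γ_O(N) equals 1/√(1−ε); that is, the infimum of |c_1| + |c_2| over all pairs of real numbers c_1, c_2 and quantum channels D_1, D_2 such that the map D = c_1·D_1 + c_2·D_2 satisfies tr[D(N(ρ))·O] = tr[ρ·O] for all density matrices ρ is exactly 1/√(1−ε), and it is attained. -/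

import Mathlib

open Matrix
open scoped Kronecker ComplexOrder

abbrev MatC (n : Type*) := Matrix n n ℂ

/-- A linear map on matrices is Hermitian-preserving if it sends Hermitian
matrices to Hermitian matrices. -/
def IsHermitianPreserving {n : Type*} [Fintype n] [DecidableEq n]
    (M : MatC n →ₗ[ℂ] MatC n) : Prop :=
  ∀ X : MatC n, X.IsHermitian → (M X).IsHermitian

/-- A linear map on matrices is trace-scaling if it scales the trace by a fixed
real factor. -/
def IsTraceScaling {n : Type*} [Fintype n] [DecidableEq n]
    (M : MatC n →ₗ[ℂ] MatC n) : Prop :=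
  ∃ p : ℝ, ∀ X : MatC n, (M X).trace = (p : ℂ) * X.trace

/-- The Choi matrix `J_M = Σ_{i,j} |i⟩⟨j| ⊗ M(|i⟩⟨j|)` of a linear map on matrices. -/
def choi {n : Type*} [Fintype n] [DecidableEq n]
    (M : MatC n →ₗ[ℂ] MatC n) : Matrix (n × n) (n × n) ℂ :=
  Matrix.of fun p q => M (Matrix.single p.1 q.1 1) p.2 q.2

/-- A quantum channel is a completely positive (positive semidefinite Choi matrix)
trace-preserving linear map. -/
def IsQuantumChannel {n : Type*} [Fintype n] [DecidableEq n]
    (M : MatC n →ₗ[ℂ] MatC n) : Prop :=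
  (choi M).PosSemidef ∧ ∀ X : MatC n, (M X).trace = X.trace

/-- `Md` is the adjoint of `M` with respect to the Hilbert-Schmidt inner product
`⟨A, B⟩ = tr[A† B]`. -/
def IsAdjointPair {n : Type*} [Fintype n] [DecidableEq n]
    (M Md : MatC n →ₗ[ℂ] MatC n) : Prop :=
  ∀ A B : MatC n, (Aᴴ * M B).trace = ((Md A)ᴴ * B).trace

/-- A density matrix: positive semidefinite with unit trace. -/
def IsDensityMatrix {n : Type*} [Fintype n] [DecidableEq n] (ρ : MatC n) : Prop :=
  ρ.PosSemidef ∧ ρ.trace = 1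

/-- The Hermitian matrices as a real submodule of the complex matrices. -/
noncomputable def hermSubmodule (n : Type*) [Fintype n] [DecidableEq n] :
    Submodule ℝ (MatC n) :=
  selfAdjoint.submodule ℝ (MatC n)

/-- The image of the Hermitian matrices under a (complex-)linear map, as a real
submodule. -/
noncomputable def hermitianImage {n : Type*} [Fintype n] [DecidableEq n]
    (M : MatC n →ₗ[ℂ] MatC n) : Submodule ℝ (MatC n) :=
  (hermSubmodule n).map (M.restrictScalars ℝ)

/-- The linear map `ρ ↦ Σ_i E_i ρ E_i†` given by a finite family of Kraus operators. -/
noncomputable def krausMap {n : Type*} [Fintype n] {k : ℕ} (E : Fin k → Matrix n n ℂ) :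
    MatC n →ₗ[ℂ] MatC n where
  toFun ρ := ∑ i, E i * ρ * (E i)ᴴ
  map_add' ρ σ := by
    simp [Matrix.mul_add, Matrix.add_mul, Finset.sum_add_distrib]
  map_smul' c ρ := by
    simp [Matrix.mul_smul, Matrix.smul_mul, Finset.smul_sum]

/-- The Pauli X matrix. -/
def PauliX : MatC (Fin 2) := !![0, 1; 1, 0]

/-- The Pauli Y matrix. -/
def PauliY : MatC (Fin 2) := !![0, -Complex.I; Complex.I, 0]

/-- The Pauli Z matrix. -/
def PauliZ : MatC (Fin 2) := !![1, 0; 0, -1]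

/-- The Kraus operators of the single-qubit generalized amplitude damping channel
with damping factor `ε` and temperature indicator `p`. -/
noncomputable def gadKraus (p ε : ℝ) : Fin 4 → MatC (Fin 2) :=
  ![(Real.sqrt p : ℂ) • !![1, 0; 0, (Real.sqrt (1 - ε) : ℂ)],
    ((Real.sqrt p * Real.sqrt ε : ℝ) : ℂ) • !![0, 1; 0, 0],
    (Real.sqrt (1 - p) : ℂ) • !![(Real.sqrt (1 - ε) : ℂ), 0; 0, 1],
    ((Real.sqrt (1 - p) * Real.sqrt ε : ℝ) : ℂ) • !![0, 0; 1, 0]]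

/-- The single-qubit generalized amplitude damping channel. -/
noncomputable def gad (p ε : ℝ) : MatC (Fin 2) →ₗ[ℂ] MatC (Fin 2) :=
  krausMap (gadKraus p ε)

/-- The set of costs `|c₁| + |c₂|` over all two-channel retrievers for the shadow
information `tr[ρ O]` through the noisy channel `N`: real numbers `c₁, c₂` and
quantum channels `D₁, D₂` such that `D = c₁·D₁ + c₂·D₂` satisfies
`tr[D(N(ρ))·O] = tr[ρ·O]` for every density matrix `ρ`. -/
def retrCosts {n : Type*} [Fintype n] [DecidableEq n]
    (N : MatC n →ₗ[ℂ] MatC n) (O : MatC n) : Set ℝ :=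
  {s | ∃ (c₁ c₂ : ℝ) (D₁ D₂ : MatC n →ₗ[ℂ] MatC n),
    IsQuantumChannel D₁ ∧ IsQuantumChannel D₂ ∧
    (∀ ρ : MatC n, IsDensityMatrix ρ →
      ((((c₁ : ℂ) • D₁ + (c₂ : ℂ) • D₂) (N ρ)) * O).trace = (ρ * O).trace) ∧
    s = |c₁| + |c₂|}

/- ### Auxiliary lemmas -/

lemma apply_entry' {n : Type*} [Fintype n] [DecidableEq n] (M : MatC n →ₗ[ℂ] MatC n)
    (σ : MatC n) (a b : n) :
    M σ a b = ∑ i, ∑ j, σ i j * M (Matrix.single i j 1) a b := by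
  conv_lhs => rw [Matrix.matrix_eq_sum_single σ]
  rw [map_sum]
  simp only [Matrix.sum_apply]
  refine Finset.sum_congr rfl fun i _ => ?_
  rw [map_sum]
  simp only [Matrix.sum_apply]
  refine Finset.sum_congr rfl fun j _ => ?_
  have h : Matrix.single i j (σ i j) = σ i j • Matrix.single i j 1 := by
    rw [Matrix.smul_single, smul_eq_mul, mul_one]
  rw [h, _root_.map_smul, Matrix.smul_apply, smul_eq_mul]

set_option maxHeartbeats 800000 in
lemma choi_posMap {n : Type*} [Fintype n] [DecidableEq n] (M : MatC n →ₗ[ℂ] MatC n)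
    (hM : (choi M).PosSemidef) {σ : MatC n} (hσ : σ.PosSemidef) : (M σ).PosSemidef := by
  obtain ⟨B, rfl⟩ : ∃ B : MatC n, σ = Bᴴ * B := by
    open scoped MatrixOrder in
    obtain ⟨X, hX, -, rfl⟩ := CFC.exists_sqrt_of_isSelfAdjoint_of_quasispectrumRestricts
      hσ.1 (QuasispectrumRestricts.nnreal_of_nonneg hσ.nonneg)
    exact ⟨X, by rw [← Matrix.star_eq_conjTranspose, hX.star_eq]⟩
  set C : n → Matrix (n × n) n ℂ :=
    fun k => Matrix.of fun ia q => B k ia.1 * (if ia.2 = q then 1 else 0) with hC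
  have key : M (Bᴴ * B) = ∑ k : n, (C k)ᴴ * choi M * (C k) := by
    ext a b
    rw [apply_entry']
    have hR : ∀ k : n, ((C k)ᴴ * choi M * (C k)) a b
        = ∑ i, ∑ j, star (B k i) * choi M (i, a) (j, b) * B k j := by
      intro k
      simp only [Matrix.mul_apply, Matrix.conjTranspose_apply, hC, Matrix.of_apply,
        Fintype.sum_prod_type, apply_ite (star : ℂ → ℂ), star_one, star_zero, mul_ite,
        mul_one, mul_zero, ite_mul, zero_mul, star_mul', Finset.sum_ite_eq,
        Finset.sum_ite_eq', Finset.mem_univ, if_true, Finset.sum_mul, Finset.mul_sum]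
      exact Finset.sum_comm
    simp only [Matrix.sum_apply, hR]
    have hL : ∀ i j : n, (Bᴴ * B) i j * M (Matrix.single i j 1) a b
        = ∑ k, star (B k i) * choi M (i, a) (j, b) * B k j := by
      intro i j
      rw [Matrix.mul_apply, Finset.sum_mul]
      exact Finset.sum_congr rfl fun k _ => by
        simp only [Matrix.conjTranspose_apply, choi, Matrix.of_apply]; ring
    simp only [hL]
    conv_rhs => rw [Finset.sum_comm]
    exact Finset.sum_congr rfl fun i _ => Finset.sum_comm
  rw [key]
  apply Finset.sum_induction _ _ (fun A B hA hB => hA.add hB) Matrix.PosSemidef.zero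
  intro k _
  exact hM.conjTranspose_mul_mul_same _

lemma gad_apply (p ε : ℝ) (hp0 : 0 ≤ p) (hp1 : p ≤ 1) (hε0 : 0 ≤ ε) (hε1 : ε ≤ 1)
    (ρ : MatC (Fin 2)) :
    gad p ε ρ = !![((1 - (1-p)*ε : ℝ) : ℂ) * ρ 0 0 + ((p*ε : ℝ) : ℂ) * ρ 1 1,
                   (Real.sqrt (1-ε) : ℂ) * ρ 0 1;
                   (Real.sqrt (1-ε) : ℂ) * ρ 1 0,
                   (((1-p)*ε : ℝ) : ℂ) * ρ 0 0 + ((1 - p*ε : ℝ) : ℂ) * ρ 1 1] := by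
  have hp : (Real.sqrt p : ℂ) * Real.sqrt p = ((p : ℝ) : ℂ) := by
    norm_cast; exact Real.mul_self_sqrt hp0
  have hq : (Real.sqrt (1-p) : ℂ) * Real.sqrt (1-p) = (((1-p : ℝ)) : ℂ) := by
    norm_cast; exact Real.mul_self_sqrt (by linarith)
  have he : (Real.sqrt ε : ℂ) * Real.sqrt ε = ((ε : ℝ) : ℂ) := by
    norm_cast; exact Real.mul_self_sqrt hε0
  have hs : (Real.sqrt (1-ε) : ℂ) * Real.sqrt (1-ε) = (((1-ε : ℝ)) : ℂ) := by
    norm_cast; exact Real.mul_self_sqrt (by linarith)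
  have hp2 : (Real.sqrt p : ℂ)^2 = ((p : ℝ) : ℂ) := by rw [sq, hp]
  have hq2 : (Real.sqrt (1-p) : ℂ)^2 = ((1-p : ℝ) : ℂ) := by rw [sq, hq]
  have he2 : (Real.sqrt ε : ℂ)^2 = ((ε : ℝ) : ℂ) := by rw [sq, he]
  have hs2 : (Real.sqrt (1-ε) : ℂ)^2 = ((1-ε : ℝ) : ℂ) := by rw [sq, hs]
  ext i j
  fin_cases i <;> fin_cases j <;>
    · simp [gad, krausMap, gadKraus, Fin.sum_univ_four, Matrix.mul_apply,
        Fin.sum_univ_two, Matrix.smul_apply, Matrix.conjTranspose_apply,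
        Matrix.vecMul, dotProduct]
      ring_nf
      simp only [hp2, hq2, he2, hs2]
      push_cast
      ring

lemma trace_mul_X (τ : MatC (Fin 2)) : (τ * PauliX).trace = τ 0 1 + τ 1 0 := by
  simp [Matrix.trace, Matrix.mul_apply, PauliX, Fin.sum_univ_two, Matrix.diag]

lemma trace_mul_Y (τ : MatC (Fin 2)) :
    (τ * PauliY).trace = Complex.I * τ 0 1 - Complex.I * τ 1 0 := by
  simp [Matrix.trace, Matrix.mul_apply, PauliY, Fin.sum_univ_two, Matrix.diag]
  ring

lemma gad_trace_mul (p ε : ℝ) (hp0 : 0 ≤ p) (hp1 : p ≤ 1) (hε0 : 0 ≤ ε) (hε1 : ε ≤ 1)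
    (O : MatC (Fin 2)) (hO : O = PauliX ∨ O = PauliY) (ρ : MatC (Fin 2)) :
    ((gad p ε ρ) * O).trace = (Real.sqrt (1-ε) : ℂ) * (ρ * O).trace := by
  rcases hO with rfl | rfl
  · rw [trace_mul_X, trace_mul_X, gad_apply p ε hp0 hp1 hε0 hε1]
    simp [Matrix.cons_val_zero, Matrix.cons_val_one]
    ring
  · rw [trace_mul_Y, trace_mul_Y, gad_apply p ε hp0 hp1 hε0 hε1]
    simp [Matrix.cons_val_zero, Matrix.cons_val_one]
    ring

lemma gad_O (p ε : ℝ) (hp0 : 0 ≤ p) (hp1 : p ≤ 1) (hε0 : 0 ≤ ε) (hε1 : ε ≤ 1)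
    (O : MatC (Fin 2)) (hO : O = PauliX ∨ O = PauliY) :
    gad p ε O = (Real.sqrt (1-ε) : ℂ) • O := by
  rcases hO with rfl | rfl <;>
    · rw [gad_apply p ε hp0 hp1 hε0 hε1]
      ext i j
      fin_cases i <;> fin_cases j <;> simp [PauliX, PauliY]

/-- Generic bound: if `0 ≤ 1 + t` and `0 ≤ 1 - t` in the complex order, then `t`
is real with `|t.re| ≤ 1`. -/
lemma bound_aux (t : ℂ) (h1 : (0:ℂ) ≤ 1 + t) (h2 : (0:ℂ) ≤ 1 - t) :
    t = (t.re : ℂ) ∧ |t.re| ≤ 1 := by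
  rw [Complex.le_def] at h1 h2
  simp only [Complex.add_re, Complex.add_im, Complex.sub_re, Complex.sub_im,
    Complex.one_re, Complex.one_im, Complex.zero_re, Complex.zero_im] at h1 h2
  constructor
  · exact Complex.ext rfl (by simpa using h1.2.symm)
  · rw [abs_le]; constructor <;> [linarith [h1.1]; linarith [h2.1]]

lemma trace_bound (O : MatC (Fin 2)) (hO : O = PauliX ∨ O = PauliY)
    (τ : MatC (Fin 2)) (hτ : τ.PosSemidef) (htr : τ.trace = 1) :
    ∃ r : ℝ, (τ * O).trace = (r : ℂ) ∧ |r| ≤ 1 := by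
  have htr' : τ 0 0 + τ 1 1 = 1 := by
    simpa [Matrix.trace, Fin.sum_univ_two, Matrix.diag] using htr
  rcases hO with rfl | rfl
  · set t : ℂ := τ 0 1 + τ 1 0 with ht
    have h1 : (0:ℂ) ≤ 1 + t := by
      have := hτ.dotProduct_mulVec_nonneg ![1, 1]
      have e : dotProduct (star ![1, 1]) (τ *ᵥ ![1, 1]) = 1 + t := by
        simp [dotProduct, Matrix.mulVec, Fin.sum_univ_two, ht]
        linear_combination htr'
      rwa [e] at this
    have h2 : (0:ℂ) ≤ 1 - t := by
      have := hτ.dotProduct_mulVec_nonneg ![1, -1]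
      have e : dotProduct (star ![1, -1]) (τ *ᵥ ![1, -1]) = 1 - t := by
        simp [dotProduct, Matrix.mulVec, Fin.sum_univ_two, ht]
        linear_combination htr'
      rwa [e] at this
    obtain ⟨hre, hb⟩ := bound_aux t h1 h2
    exact ⟨t.re, by rw [trace_mul_X, ← ht]; exact hre, hb⟩
  · set t : ℂ := Complex.I * τ 0 1 - Complex.I * τ 1 0 with ht
    have h1 : (0:ℂ) ≤ 1 + t := by
      have := hτ.dotProduct_mulVec_nonneg ![1, Complex.I]
      have e : dotProduct (star ![1, Complex.I]) (τ *ᵥ ![1, Complex.I]) = 1 + t := by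
        simp [dotProduct, Matrix.mulVec, Fin.sum_univ_two, ht]
        linear_combination (1 : ℂ) * htr' - τ 1 1 * Complex.I_sq
      rwa [e] at this
    have h2 : (0:ℂ) ≤ 1 - t := by
      have := hτ.dotProduct_mulVec_nonneg ![1, -Complex.I]
      have e : dotProduct (star ![1, -Complex.I]) (τ *ᵥ ![1, -Complex.I]) = 1 - t := by
        simp [dotProduct, Matrix.mulVec, Fin.sum_univ_two, ht]
        linear_combination (1 : ℂ) * htr' - τ 1 1 * Complex.I_sq
      rwa [e] at this
    obtain ⟨hre, hb⟩ := bound_aux t h1 h2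
    exact ⟨t.re, by rw [trace_mul_Y, ← ht]; exact hre, hb⟩

lemma psd_of_vec (v : Fin 2 → ℂ) :
    (Matrix.of fun i j => (starRingEnd ℂ) (v i) * v j : MatC (Fin 2)).PosSemidef := by
  have h : (Matrix.of fun i j => (starRingEnd ℂ) (v i) * v j : MatC (Fin 2))
      = (Matrix.of fun (_ : Fin 1) j => v j)ᴴ * (Matrix.of fun (_ : Fin 1) j => v j) := by
    ext i j
    simp [Matrix.mul_apply, Matrix.conjTranspose_apply]
  rw [h]
  exact Matrix.posSemidef_conjTranspose_mul_self _

/-- The pair of density matrices `(1 ± O)/2` for `O ∈ {X, Y}`. -/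
lemma exists_rho (O : MatC (Fin 2)) (hO : O = PauliX ∨ O = PauliY) :
    ∃ ρp ρm : MatC (Fin 2), IsDensityMatrix ρp ∧ IsDensityMatrix ρm ∧
      (ρp * O).trace = 1 ∧ (ρm * O).trace = -1 ∧ ρp - ρm = O := by
  have hI3 : Complex.I ^ 3 = -Complex.I := by norm_num [pow_succ, Complex.I_sq]
  rcases hO with rfl | rfl
  · refine ⟨!![1/2, 1/2; 1/2, 1/2], !![1/2, -(1/2); -(1/2), 1/2], ⟨?_, ?_⟩, ⟨?_, ?_⟩, ?_, ?_, ?_⟩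
    · have h := psd_of_vec ![(1+Complex.I)/2, (1+Complex.I)/2]
      convert h using 1
      ext i j
      fin_cases i <;> fin_cases j <;>
        simp [Matrix.of_apply, map_div₀] <;> ring_nf <;> simp [hI3, Complex.I_sq, Complex.ext_iff] <;> norm_num
    · simp [Matrix.trace, Fin.sum_univ_two, Matrix.diag]; norm_num
    · have h := psd_of_vec ![(1+Complex.I)/2, -((1+Complex.I)/2)]
      convert h using 1
      ext i j
      fin_cases i <;> fin_cases j <;>
        simp [Matrix.of_apply, map_div₀] <;> ring_nf <;> simp [hI3, Complex.I_sq, Complex.ext_iff] <;> norm_num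
    · simp [Matrix.trace, Fin.sum_univ_two, Matrix.diag]; norm_num
    · rw [trace_mul_X]; norm_num
    · rw [trace_mul_X]; norm_num
    · ext i j; fin_cases i <;> fin_cases j <;> simp [PauliX] <;> norm_num
  · refine ⟨!![1/2, -Complex.I/2; Complex.I/2, 1/2], !![1/2, Complex.I/2; -Complex.I/2, 1/2],
      ⟨?_, ?_⟩, ⟨?_, ?_⟩, ?_, ?_, ?_⟩
    · have h := psd_of_vec ![(1+Complex.I)/2, -Complex.I*(1+Complex.I)/2]
      convert h using 1
      ext i j
      fin_cases i <;> fin_cases j <;>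
        simp [Matrix.of_apply, map_div₀] <;> ring_nf <;> simp [hI3, Complex.I_sq, Complex.ext_iff] <;> norm_num
    · simp [Matrix.trace, Fin.sum_univ_two, Matrix.diag]; norm_num
    · have h := psd_of_vec ![(1+Complex.I)/2, Complex.I*(1+Complex.I)/2]
      convert h using 1
      ext i j
      fin_cases i <;> fin_cases j <;>
        simp [Matrix.of_apply, map_div₀] <;> ring_nf <;> simp [hI3, Complex.I_sq, Complex.ext_iff] <;> norm_num
    · simp [Matrix.trace, Fin.sum_univ_two, Matrix.diag]; norm_num
    · rw [trace_mul_Y]; ring_nf; simp [Complex.ext_iff]; norm_num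
    · rw [trace_mul_Y]; ring_nf; simp [Complex.ext_iff]; norm_num
    · ext i j; fin_cases i <;> fin_cases j <;> simp [PauliY] <;> ring

lemma id_channel : IsQuantumChannel (LinearMap.id : MatC (Fin 2) →ₗ[ℂ] MatC (Fin 2)) := by
  constructor
  · have h : choi (LinearMap.id : MatC (Fin 2) →ₗ[ℂ] MatC (Fin 2))
        = (Matrix.of fun (_ : Fin 1) (ik : Fin 2 × Fin 2) => if ik.1 = ik.2 then (1:ℂ) else 0)ᴴ
          * (Matrix.of fun (_ : Fin 1) (ik : Fin 2 × Fin 2) => if ik.1 = ik.2 then (1:ℂ) else 0) := by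
      ext ⟨i, k⟩ ⟨j, l⟩
      fin_cases i <;> fin_cases k <;> fin_cases j <;> fin_cases l <;>
        simp [choi, Matrix.mul_apply, Matrix.single, Matrix.conjTranspose_apply]
    rw [h]
    exact Matrix.posSemidef_conjTranspose_mul_self _
  · intro X; rfl

lemma expand_comb (c₁ c₂ : ℝ) (D₁ D₂ : MatC (Fin 2) →ₗ[ℂ] MatC (Fin 2))
    (σ O : MatC (Fin 2)) :
    ((((c₁ : ℂ) • D₁ + (c₂ : ℂ) • D₂) σ) * O).trace
      = (c₁ : ℂ) * ((D₁ σ) * O).trace + (c₂ : ℂ) * ((D₂ σ) * O).trace := by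
  simp [Matrix.add_mul, Matrix.smul_mul, Matrix.trace_add, Matrix.trace_smul, smul_eq_mul]

/-- The retrieving cost of the observable `O ∈ {X, Y}` through the generalized
amplitude damping channel is exactly `1/√(1−ε)`, and it is attained. -/
theorem stmt14 (p ε : ℝ) (hp0 : 0 ≤ p) (hp1 : p ≤ 1) (hε0 : 0 ≤ ε) (hε1 : ε < 1)
    (O : MatC (Fin 2)) (hO : O = PauliX ∨ O = PauliY) :
    IsLeast (retrCosts (gad p ε) O) (1 / Real.sqrt (1 - ε)) := by
  have hεle : ε ≤ 1 := hε1.le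
  set s0 : ℝ := Real.sqrt (1 - ε) with hs0def
  have hs0 : 0 < s0 := Real.sqrt_pos.mpr (by linarith)
  constructor
  · -- membership
    refine ⟨1 / s0, 0, LinearMap.id, LinearMap.id, id_channel, id_channel, ?_, ?_⟩
    · intro ρ _
      rw [expand_comb]
      simp only [LinearMap.id_coe, id_eq, Complex.ofReal_zero, zero_mul, add_zero]
      rw [gad_trace_mul p ε hp0 hp1 hε0 hεle O hO ρ]
      rw [← mul_assoc]
      norm_cast
      rw [one_div, inv_mul_cancel₀ hs0.ne']
      simp
    · rw [abs_of_pos (div_pos one_pos hs0), abs_zero, add_zero]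
  · -- lower bound
    rintro s ⟨c₁, c₂, D₁, D₂, hQ1, hQ2, hret, rfl⟩
    obtain ⟨ρp, ρm, hdp, hdm, htp, htm, hdiff⟩ := exists_rho O hO
    obtain ⟨r1p, hr1p, hb1p⟩ := trace_bound O hO (D₁ ρp)
      (choi_posMap D₁ hQ1.1 hdp.1) (by rw [hQ1.2]; exact hdp.2)
    obtain ⟨r1m, hr1m, hb1m⟩ := trace_bound O hO (D₁ ρm)
      (choi_posMap D₁ hQ1.1 hdm.1) (by rw [hQ1.2]; exact hdm.2)
    obtain ⟨r2p, hr2p, hb2p⟩ := trace_bound O hO (D₂ ρp)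
      (choi_posMap D₂ hQ2.1 hdp.1) (by rw [hQ2.2]; exact hdp.2)
    obtain ⟨r2m, hr2m, hb2m⟩ := trace_bound O hO (D₂ ρm)
      (choi_posMap D₂ hQ2.1 hdm.1) (by rw [hQ2.2]; exact hdm.2)
    have eqp := hret ρp hdp
    have eqm := hret ρm hdm
    rw [expand_comb, htp] at eqp
    rw [expand_comb, htm] at eqm
    have hgadO : gad p ε O = (s0 : ℂ) • O := gad_O p ε hp0 hp1 hε0 hεle O hO
    have hd : ∀ D : MatC (Fin 2) →ₗ[ℂ] MatC (Fin 2),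
        ((D (gad p ε ρp)) * O).trace - ((D (gad p ε ρm)) * O).trace
          = (s0 : ℂ) * (((D ρp) * O).trace - ((D ρm) * O).trace) := by
      intro D
      have h1 : D (gad p ε ρp) - D (gad p ε ρm) = (s0 : ℂ) • (D ρp - D ρm) := by
        rw [← map_sub, ← map_sub, hdiff, hgadO, _root_.map_smul, ← hdiff, map_sub]
      calc ((D (gad p ε ρp)) * O).trace - ((D (gad p ε ρm)) * O).trace
          = ((D (gad p ε ρp) - D (gad p ε ρm)) * O).trace := by
            rw [Matrix.sub_mul, Matrix.trace_sub]
        _ = (((s0 : ℂ) • (D ρp - D ρm)) * O).trace := by rw [h1]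
        _ = (s0 : ℂ) * (((D ρp) * O).trace - ((D ρm) * O).trace) := by
            rw [Matrix.smul_mul, Matrix.trace_smul, smul_eq_mul, Matrix.sub_mul,
              Matrix.trace_sub]
    have hd1 := hd D₁
    have hd2 := hd D₂
    rw [hr1p, hr1m] at hd1
    rw [hr2p, hr2m] at hd2
    have key : (2 : ℂ) = (s0 : ℂ) * ((c₁ : ℂ) * ((r1p : ℂ) - r1m) + (c₂ : ℂ) * ((r2p : ℂ) - r2m)) := by
      linear_combination (c₁ : ℂ) * hd1 + (c₂ : ℂ) * hd2 - eqp + eqm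
    have keyR : (2 : ℝ) = s0 * (c₁ * (r1p - r1m) + c₂ * (r2p - r2m)) := by
      exact_mod_cast key
    have b1 : c₁ * (r1p - r1m) ≤ |c₁| * 2 := by
      calc c₁ * (r1p - r1m) ≤ |c₁ * (r1p - r1m)| := le_abs_self _
        _ = |c₁| * |r1p - r1m| := abs_mul _ _
        _ ≤ |c₁| * 2 := by
            apply mul_le_mul_of_nonneg_left _ (abs_nonneg c₁)
            calc |r1p - r1m| ≤ |r1p| + |r1m| := abs_sub _ _
              _ ≤ 2 := by linarith
    have b2 : c₂ * (r2p - r2m) ≤ |c₂| * 2 := by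
      calc c₂ * (r2p - r2m) ≤ |c₂ * (r2p - r2m)| := le_abs_self _
        _ = |c₂| * |r2p - r2m| := abs_mul _ _
        _ ≤ |c₂| * 2 := by
            apply mul_le_mul_of_nonneg_left _ (abs_nonneg c₂)
            calc |r2p - r2m| ≤ |r2p| + |r2m| := abs_sub _ _
              _ ≤ 2 := by linarith
    have hE : c₁ * (r1p - r1m) + c₂ * (r2p - r2m) ≤ 2 * (|c₁| + |c₂|) := by linarith
    have h2le : (2 : ℝ) ≤ s0 * (2 * (|c₁| + |c₂|)) := by
      calc (2 : ℝ) = s0 * (c₁ * (r1p - r1m) + c₂ * (r2p - r2m)) := keyR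
        _ ≤ s0 * (2 * (|c₁| + |c₂|)) := mul_le_mul_of_nonneg_left hE hs0.le
    rw [div_le_iff₀ hs0]
    nlinarith
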